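/- Let p be prime, l ≥ m, and let ID = (I₁,…,I_m), ID* = (I*₁,…,I*_n) with n ≥ m be vectors over ZMod p such that I_j ≠ I*_j for some j ≤ m. Then the (l−m+2) × (l+1) matrix whose first row is (1, I*₁,…,I*_n, 0,…,0), second row is (1, I₁,…,I_m, 0,…,0), and remaining l−m rows are standard basis vectors e_{m+2},…,e_{l+1}, has rank l−m+2. -/

import Mathlib

/-- The matrix from the anonymity proof: row 0 is `(1, I*₁,…,I*ₙ, 0,…,0)`,
row 1 is `(1, I₁,…,Iₘ, 0,…,0)`, and rows `k = 2,…,l-m+1` are the standard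
basis vectors with a `1` in column `m + k - 1`. -/
def keyMatrix (p l m n : ℕ) (I : Fin m → ZMod p) (Istar : Fin n → ZMod p)
    (hmn : m ≤ n) (hnl : n ≤ l) :
    Matrix (Fin (l - m + 2)) (Fin (l + 1)) (ZMod p) :=
  fun i j =>
    if i.val = 0 then
      (if h0 : j.val = 0 then 1
       else if h : j.val ≤ n then Istar ⟨j.val - 1, by omega⟩ else 0)
    else if i.val = 1 then
      (if h0 : j.val = 0 then 1
       else if h : j.val ≤ m then I ⟨j.val - 1, by omega⟩ else 0)
    else
      (if j.val = m + i.val - 1 then 1 else 0)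

theorem keyMatrix_rank (p l m n : ℕ) [Fact p.Prime]
    (I : Fin m → ZMod p) (Istar : Fin n → ZMod p)
    (hmn : m ≤ n) (hnl : n ≤ l)
    (hdiff : ∃ j : Fin m, I j ≠ Istar ⟨j.val, lt_of_lt_of_le j.isLt hmn⟩) :
    (keyMatrix p l m n I Istar hmn hnl).rank = l - m + 2 := by
  set M := keyMatrix p l m n I Istar hmn hnl with hM
  have hli : LinearIndependent (ZMod p) M := by
    refine Fintype.linearIndependent_iff.mpr ?_
    intro g hg
    obtain ⟨j, hj⟩ := hdiff
    have hc : ∀ c : Fin (l + 1), ∑ i, g i * M i c = 0 := by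
      intro c
      have := congrFun hg c
      simpa [Finset.sum_apply, smul_eq_mul] using this
    -- column 0
    have h0 := hc ⟨0, by omega⟩
    rw [Fin.sum_univ_succ, Fin.sum_univ_succ] at h0
    have hz0 : ∀ i : Fin (l - m), g i.succ.succ * M i.succ.succ ⟨0, by omega⟩ = 0 := by
      intro i
      have : M i.succ.succ ⟨0, by omega⟩ = 0 := by
        simp only [hM, keyMatrix, Fin.val_succ]
        have h1 : ¬ (i.val + 1 + 1 = 0) := by omega
        have h2 : ¬ (i.val + 1 + 1 = 1) := by omega
        have h3 : ¬ ((0 : ℕ) = m + (i.val + 1)) := by omega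
        simp [h1, h2, h3]
      rw [this, mul_zero]
    rw [Finset.sum_eq_zero (fun i _ => hz0 i), add_zero] at h0
    have hM00 : M 0 ⟨0, by omega⟩ = 1 := by
      simp [hM, keyMatrix, Fin.val_zero]
    have hM10 : M 1 ⟨0, by omega⟩ = 1 := by
      have h1 : ((1 : Fin (l - m + 2)) : ℕ) = 1 := by
        simp [Fin.val_one]
      simp [hM, keyMatrix, h1]
    have hfs0 : (0 : Fin (l - m + 1)).succ = (1 : Fin (l - m + 2)) := by
      apply Fin.ext; simp [Fin.val_one]
    rw [hfs0, hM00, hM10, mul_one, mul_one] at h0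
    -- column j+1
    have hcj := hc ⟨j.val + 1, by omega⟩
    rw [Fin.sum_univ_succ, Fin.sum_univ_succ] at hcj
    have hzj : ∀ i : Fin (l - m), g i.succ.succ * M i.succ.succ ⟨j.val + 1, by omega⟩ = 0 := by
      intro i
      have : M i.succ.succ ⟨j.val + 1, by omega⟩ = 0 := by
        simp only [hM, keyMatrix, Fin.val_succ]
        have h1 : ¬ (i.val + 1 + 1 = 0) := by omega
        have h2 : ¬ (i.val + 1 + 1 = 1) := by omega
        have h3 : ¬ (j.val + 1 = m + (i.val + 1)) := by omega
        simp [h1, h2, h3]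
      rw [this, mul_zero]
    rw [Finset.sum_eq_zero (fun i _ => hzj i), add_zero] at hcj
    have hM0j : M 0 ⟨j.val + 1, by omega⟩ = Istar ⟨j.val, lt_of_lt_of_le j.isLt hmn⟩ := by
      have h1 : ¬ (j.val + 1 = 0) := by omega
      have h2 : j.val + 1 ≤ n := by omega
      simp [hM, keyMatrix, h1, h2]
    have hM1j : M 1 ⟨j.val + 1, by omega⟩ = I j := by
      have h0 : ((1 : Fin (l - m + 2)) : ℕ) = 1 := by simp [Fin.val_one]
      have h1 : ¬ (j.val + 1 = 0) := by omega
      have h2 : j.val + 1 ≤ m := by omega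
      simp [hM, keyMatrix, h0, h1, h2]
    rw [hfs0, hM0j, hM1j] at hcj
    -- deduce g 0 = g 1 = 0
    have hg1 : g 1 = 0 := by
      have hgeq : g 0 = - g 1 := by linear_combination h0
      rw [hgeq] at hcj
      have : g 1 * (I j - Istar ⟨j.val, lt_of_lt_of_le j.isLt hmn⟩) = 0 := by
        linear_combination hcj
      rcases mul_eq_zero.mp this with h | h
      · exact h
      · exact absurd (sub_eq_zero.mp h) hj
    have hg0 : g 0 = 0 := by
      rw [hg1] at h0; simpa using h0
    -- now each remaining g i = 0
    intro i
    rcases Nat.lt_or_ge i.val 2 with hi2 | hi2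
    · interval_cases h : i.val
      · have : i = 0 := Fin.ext h
        rw [this]; exact hg0
      · have : i = 1 := Fin.ext h
        rw [this]; exact hg1
    · -- column m + i.val - 1
      have hcol : m + i.val - 1 < l + 1 := by
        have := i.isLt; omega
      have hci := hc ⟨m + i.val - 1, hcol⟩
      rw [Finset.sum_eq_single i] at hci
      · have : M i ⟨m + i.val - 1, hcol⟩ = 1 := by
          have h1 : ¬ (i.val = 0) := by omega
          have h2 : ¬ (i.val = 1) := by omega
          simp [hM, keyMatrix, h1, h2]
        rw [this, mul_one] at hci
        exact hci
      · intro k _ hk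
        rcases Nat.lt_or_ge k.val 2 with hk2 | hk2
        · interval_cases h : k.val
          · have : k = 0 := Fin.ext h
            rw [this, hg0, zero_mul]
          · have : k = 1 := Fin.ext h
            rw [this, hg1, zero_mul]
        · have : M k ⟨m + i.val - 1, hcol⟩ = 0 := by
            have h1 : ¬ (k.val = 0) := by omega
            have h2 : ¬ (k.val = 1) := by omega
            have h3 : ¬ (m + i.val - 1 = m + k.val - 1) := by
              have := Fin.val_ne_of_ne hk; omega
            simp [hM, keyMatrix, h1, h2, h3]
          rw [this, mul_zero]
      · intro h; exact absurd (Finset.mem_univ i) h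
  have := hli.rank_matrix
  exact this.trans (Fintype.card_fin _)
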